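/- Let K be a field, n a natural number, and σ a permutation of Fin n. Assume that for every length s occurring in the cycle type of σ, K contains a primitive (2^s − 1)-th root of unity. On Fin n → K define (x •_σ y)(i) = x(σ(i))·y(σ(i)). Then the set of idempotents of •_σ, i.e. {c : Fin n → K | c(σ(i))² = c(i) for all i ∈ Fin n}, has exactly 2^n elements. -/

import Mathlib

open Function Polynomial

section Aux

variable {K : Type*} [Field K]

private lemma aux_pow_add {x : K} {p : ℕ} (h : x ^ 2 ^ p = x) (a : ℕ) :
    x ^ 2 ^ (a + p) = x ^ 2 ^ a := by
  have h2 : (2 : ℕ) ^ (a + p) = 2 ^ p * 2 ^ a := by rw [pow_add, mul_comm]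
  rw [h2, pow_mul, h]

private lemma aux_mod {x : K} {p : ℕ} (hp : 0 < p) (h : x ^ 2 ^ p = x) :
    ∀ a : ℕ, x ^ 2 ^ a = x ^ 2 ^ (a % p) := by
  intro a
  induction a using Nat.strong_induction_on with
  | _ a ih =>
    rcases lt_or_ge a p with h' | h'
    · rw [Nat.mod_eq_of_lt h']
    · have e1 : a = (a - p) + p := (Nat.sub_add_cancel h').symm
      rw [e1, Nat.add_mod_right, aux_pow_add h]
      exact ih _ (by omega)

private lemma aux_card_sol {s : ℕ} (hs : 0 < s)
    (hζ : ∃ ζ : K, IsPrimitiveRoot ζ (2 ^ s - 1)) :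
    Nat.card {x : K // x ^ 2 ^ s = x} = 2 ^ s := by
  classical
  obtain ⟨ζ, hζ⟩ := hζ
  have h1 : 1 ≤ 2 ^ s := Nat.one_le_two_pow
  have h2 : 2 ≤ 2 ^ s := by
    calc 2 = 2 ^ 1 := (pow_one 2).symm
    _ ≤ 2 ^ s := Nat.pow_le_pow_right (by norm_num) hs
  have hm : 0 < 2 ^ s - 1 := by omega
  have hset : {x : K | x ^ 2 ^ s = x} = ↑(insert (0 : K) (nthRootsFinset (2 ^ s - 1) (1 : K))) := by
    ext x
    simp only [Set.mem_setOf_eq, Finset.coe_insert, Set.mem_insert_iff, Finset.mem_coe,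
      mem_nthRootsFinset hm (1 : K)]
    constructor
    · intro h
      rcases eq_or_ne x 0 with rfl | hx
      · exact Or.inl rfl
      · refine Or.inr (mul_right_cancel₀ hx ?_)
        rw [one_mul, ← pow_succ, Nat.sub_add_cancel h1]
        exact h
    · rintro (rfl | h)
      · exact zero_pow (by positivity)
      · calc x ^ 2 ^ s = x ^ (2 ^ s - 1) * x := by rw [← pow_succ, Nat.sub_add_cancel h1]
        _ = x := by rw [h, one_mul]
  have key : {x : K | x ^ 2 ^ s = x}.ncard = 2 ^ s := by
    rw [hset, Set.ncard_coe_finset,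
      Finset.card_insert_of_notMem (fun h0 => (ne_zero_of_mem_nthRootsFinset one_ne_zero h0) rfl),
      hζ.card_nthRootsFinset]
    omega
  calc Nat.card {x : K // x ^ 2 ^ s = x} = Nat.card ↥{x : K | x ^ 2 ^ s = x} := rfl
  _ = {x : K | x ^ 2 ^ s = x}.ncard := Nat.card_coe_set_eq _
  _ = 2 ^ s := key

end Aux

/-- If `K` contains a primitive `(2^s − 1)`-th root of unity for every cycle length `s` of
the permutation `σ`, then the inner isotope `(Fin n → K, •_σ)` has exactly `2^n`
idempotents. -/
theorem stmt_17 {K : Type*} [Field K] (n : ℕ) (σ : Equiv.Perm (Fin n))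
    (hK : ∀ s ∈ σ.cycleType, ∃ ζ : K, IsPrimitiveRoot ζ (2 ^ s - 1)) :
    Set.ncard {c : Fin n → K | ∀ i : Fin n, c (σ i) ^ 2 = c i} = 2 ^ n := by
  classical
  set p : Fin n → ℕ := fun i => Function.minimalPeriod σ i with hpdef
  have hper : ∀ i : Fin n, i ∈ Function.periodicPts σ := fun i =>
    ⟨orderOf σ, orderOf_pos σ, show (σ ^ orderOf σ) i = i by rw [pow_orderOf_eq_one]; rfl⟩
  have hp : ∀ i, 0 < p i := fun i => Function.minimalPeriod_pos_of_mem_periodicPts (hper i)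
  have hmodeq : ∀ (i : Fin n) (a : ℕ), (σ ^ a) i = (σ ^ (a % p i)) i := fun i a =>
    (Function.iterate_mod_minimalPeriod_eq (f := ⇑σ) (n := a) (x := i)).symm
  have hinj : ∀ (i : Fin n) (a b : ℕ), (σ ^ a) i = (σ ^ b) i → a % p i = b % p i := by
    intro i a b hab
    have h1 : (⇑σ)^[a % p i] i = (⇑σ)^[b % p i] i := by
      rw [Function.iterate_mod_minimalPeriod_eq, Function.iterate_mod_minimalPeriod_eq]
      exact hab
    exact Function.iterate_injOn_Iio_minimalPeriod
      (Set.mem_Iio.2 (Nat.mod_lt _ (hp i))) (Set.mem_Iio.2 (Nat.mod_lt _ (hp i))) h1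
  -- setoid of cycles
  let st : Setoid (Fin n) :=
    ⟨σ.SameCycle, ⟨fun x => Equiv.Perm.SameCycle.refl σ x, Equiv.Perm.SameCycle.symm,
      Equiv.Perm.SameCycle.trans⟩⟩
  let Q := Quotient st
  haveI : Finite Q := Quotient.finite st
  haveI fQ : Fintype Q := Fintype.ofFinite Q
  have hclass : ∀ i : Fin n, Nat.card {j : Fin n // σ.SameCycle i j} = p i := by
    intro i
    have e : Fin (p i) ≃ {j : Fin n // σ.SameCycle i j} := by
      apply Equiv.ofBijective (fun k => ⟨(σ ^ (k : ℕ)) i, (k : ℕ), by rw [zpow_natCast]⟩)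
      constructor
      · intro a b hab
        have h2 := hinj i a b (congrArg Subtype.val hab)
        rw [Nat.mod_eq_of_lt a.2, Nat.mod_eq_of_lt b.2] at h2
        exact Fin.ext h2
      · rintro ⟨j, hj⟩
        obtain ⟨k, hk, rfl⟩ := hj.exists_pow_eq'
        exact ⟨⟨k % p i, Nat.mod_lt _ (hp i)⟩, Subtype.ext (hmodeq i k).symm⟩
    rw [Nat.card_congr e.symm, Nat.card_eq_fintype_card, Fintype.card_fin]
  have hconst : ∀ i j, σ.SameCycle i j → p i = p j := by
    intro i j hij
    have e : {k : Fin n // σ.SameCycle i k} ≃ {k : Fin n // σ.SameCycle j k} :=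
      Equiv.subtypeEquivRight (fun k => ⟨fun h => hij.symm.trans h, fun h => hij.trans h⟩)
    rw [← hclass i, ← hclass j, Nat.card_congr e]
  have hroot : ∀ i : Fin n, ∃ ζ : K, IsPrimitiveRoot ζ (2 ^ p i - 1) := by
    intro i
    by_cases hfix : σ i = i
    · have h1 : p i = 1 := Function.minimalPeriod_eq_one_iff_isFixedPt.2 hfix
      rw [h1]
      exact ⟨1, by norm_num [IsPrimitiveRoot.one]⟩
    · apply hK
      have hmem : σ.cycleOf i ∈ σ.cycleFactorsFinset :=
        Equiv.Perm.cycleOf_mem_cycleFactorsFinset_iff.2 (Equiv.Perm.mem_support.2 hfix)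
      have hcard : (σ.cycleOf i).support.card = p i := by
        have hsupp : (σ.cycleOf i).support
            = Finset.univ.filter (fun j => σ.SameCycle i j) := by
          ext j
          rw [Equiv.Perm.mem_support_cycleOf_iff]
          simp [Equiv.Perm.mem_support.2 hfix]
        rw [hsupp, ← Fintype.card_subtype, ← Nat.card_eq_fintype_card, hclass]
      rw [← hcard, Equiv.Perm.cycleType_def]
      exact Multiset.mem_map_of_mem _ (Finset.mem_val.symm ▸ hmem)
  have hB : ∀ (c : Fin n → K), (∀ i, c (σ i) ^ 2 = c i) →
      ∀ (m : ℕ) (i : Fin n), c ((σ ^ m) i) ^ 2 ^ m = c i := by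
    intro c hc m
    induction m with
    | zero => intro i; simp
    | succ m ih =>
      intro i
      have h1 : (σ ^ (m + 1)) i = (σ ^ m) (σ i) := by rw [pow_succ]; rfl
      rw [h1, pow_succ, pow_mul, ih (σ i)]
      exact hc i
  have hsq : ∀ (c : Fin n → K), (∀ i, c (σ i) ^ 2 = c i) →
      ∀ i, (c i) ^ 2 ^ p i = c i := by
    intro c hc i
    have h1 := hB c hc (p i) i
    rwa [show (σ ^ p i) i = i from Function.iterate_minimalPeriod] at h1
  have hQmk : ∀ i : Fin n, Quotient.mk st (σ i) = Quotient.mk st i := fun i =>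
    Quotient.sound ((Equiv.Perm.sameCycle_apply_left).2 (Equiv.Perm.SameCycle.refl σ i))
  have hout : ∀ i : Fin n, σ.SameCycle (Quotient.mk st i).out i := fun i =>
    Quotient.mk_out (s := st) i
  have hexd : ∀ i : Fin n, ∃ m : ℕ, (σ ^ m) i = (Quotient.mk st i).out := by
    intro i
    obtain ⟨k, _, hk⟩ := (hout i).symm.exists_pow_eq'
    exact ⟨k, hk⟩
  let d : Fin n → ℕ := fun i => (hexd i).choose
  have hd : ∀ i, (σ ^ d i) i = (Quotient.mk st i).out := fun i => (hexd i).choose_spec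
  have hback : ∀ (f : ∀ q : Q, {x : K // x ^ 2 ^ p q.out = x}) (i : Fin n),
      ((f (Quotient.mk st (σ i))).1 ^ 2 ^ d (σ i)) ^ 2
        = (f (Quotient.mk st i)).1 ^ 2 ^ d i := by
    intro f i
    rw [hQmk i]
    set x := (f (Quotient.mk st i)).1 with hxdef
    have hx : x ^ 2 ^ p i = x := by
      rw [← hconst _ _ (hout i)]
      exact (f (Quotient.mk st i)).2
    have hmod : (d (σ i) + 1) % p i = d i % p i := by
      apply hinj i
      have h1 : (σ ^ (d (σ i) + 1)) i = (Quotient.mk st i).out := by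
        have h2 := hd (σ i)
        rw [hQmk i] at h2
        rw [show (σ ^ (d (σ i) + 1)) i = (σ ^ d (σ i)) (σ i) by rw [pow_succ]; rfl]
        exact h2
      rw [h1, hd i]
    rw [← pow_mul, ← pow_succ, aux_mod (hp i) hx (d (σ i) + 1), hmod,
      ← aux_mod (hp i) hx (d i)]
  let E : {c : Fin n → K // ∀ i, c (σ i) ^ 2 = c i}
      ≃ (∀ q : Q, {x : K // x ^ 2 ^ p q.out = x}) :=
    { toFun := fun c q => ⟨c.1 q.out, hsq c.1 c.2 q.out⟩
      invFun := fun f => ⟨fun i => (f (Quotient.mk st i)).1 ^ 2 ^ d i, fun i => hback f i⟩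
      left_inv := by
        intro c
        apply Subtype.ext
        funext i
        show c.1 (Quotient.mk st i).out ^ 2 ^ d i = c.1 i
        rw [← hd i]
        exact hB c.1 c.2 (d i) i
      right_inv := by
        intro f
        funext q
        apply Subtype.ext
        show (f (Quotient.mk st q.out)).1 ^ 2 ^ d q.out = (f q).1
        have hq : Quotient.mk st q.out = q := Quotient.out_eq q
        rw [hq]
        have hx : (f q).1 ^ 2 ^ p q.out = (f q).1 := (f q).2
        have h0 : d q.out % p q.out = 0 := by
          have h1 : (σ ^ d q.out) q.out = (σ ^ 0) q.out := by
            rw [pow_zero]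
            have h2 := hd q.out
            rw [hq] at h2
            exact h2.trans rfl
          simpa using hinj q.out (d q.out) 0 h1
        rw [aux_mod (hp q.out) hx (d q.out), h0, pow_zero, pow_one] }
  have hcardS : Nat.card {c : Fin n → K // ∀ i, c (σ i) ^ 2 = c i}
      = ∏ q : Q, 2 ^ p (Quotient.out q) := by
    rw [Nat.card_congr E, Nat.card_pi]
    exact Finset.prod_congr rfl fun q _ => aux_card_sol (hp q.out) (hroot q.out)
  have hfib : ∀ q : Q,
      (Finset.univ.filter fun i : Fin n => Quotient.mk st i = q).card = p q.out := by
    intro q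
    rw [← Fintype.card_subtype, ← Nat.card_eq_fintype_card]
    have e : {i : Fin n // Quotient.mk st i = q} ≃ {i : Fin n // σ.SameCycle q.out i} := by
      apply Equiv.subtypeEquivRight
      intro i
      constructor
      · intro h; rw [← h]; exact hout i
      · intro h; exact (Quotient.sound h.symm).trans (Quotient.out_eq q)
    rw [Nat.card_congr e, hclass]
  have hsum : ∑ q : Q, p (Quotient.out q) = n := by
    have h1 := Finset.card_eq_sum_card_fiberwise
      (f := fun i : Fin n => Quotient.mk st i) (s := Finset.univ) (t := Finset.univ)
      (fun x _ => Finset.mem_univ _)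
    rw [Finset.card_univ, Fintype.card_fin] at h1
    calc ∑ q : Q, p (Quotient.out q)
        = ∑ q : Q, (Finset.filter (fun i : Fin n => Quotient.mk st i = q) Finset.univ).card :=
          Finset.sum_congr rfl fun q _ => (hfib q).symm
      _ = n := h1.symm
  calc Set.ncard {c : Fin n → K | ∀ i : Fin n, c (σ i) ^ 2 = c i}
      = Nat.card {c : Fin n → K // ∀ i, c (σ i) ^ 2 = c i} :=
        (Nat.card_coe_set_eq _).symm
    _ = ∏ q : Q, 2 ^ p (Quotient.out q) := hcardS
    _ = 2 ^ ∑ q : Q, p (Quotient.out q) :=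
        Finset.prod_pow_eq_pow_sum Finset.univ _ 2
    _ = 2 ^ n := by rw [hsum]
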